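/- If R is a recovery set for some coordinate i of a linear code C over F_q (with d(C⊥) defined as the minimum distance of the dual code), then #R ≥ d(C⊥) − 1. Consequently, the locality r of a locally recoverable code C satisfies r ≥ d(C⊥) − 1. -/
import Mathlib


/-- Hamming weight of a vector. -/
def wt {F : Type*} [Field F] {n : ℕ} [DecidableEq F] (x : Fin n → F) : ℕ :=
  (Finset.univ.filter fun i => x i ≠ 0).card

/-- Minimum weight (= minimum distance, for linear codes) of a set of vectors. -/
noncomputable def minWt {F : Type*} [Field F] {n : ℕ} [DecidableEq F] (S : Set (Fin n → F)) : ℕ :=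
  sInf { w | ∃ x ∈ S, x ≠ 0 ∧ wt x = w }

/-- Dual code of a linear code. -/
def dualCode {F : Type*} [Field F] {n : ℕ} (C : Submodule F (Fin n → F)) :
    Submodule F (Fin n → F) where
  carrier := { w | ∀ x ∈ C, ∑ i, x i * w i = 0 }
  add_mem' := by
    intro a b ha hb x hx
    have h1 := ha x hx
    have h2 := hb x hx
    simp only [Set.mem_setOf_eq] at *
    simp [Pi.add_apply, mul_add, Finset.sum_add_distrib, h1, h2]
  zero_mem' := by intro x hx; simp
  smul_mem' := by
    intro c w hw x hx
    have h := hw x hx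
    simp only [Set.mem_setOf_eq] at *
    have : ∑ i, x i * (c • w) i = c * ∑ i, x i * w i := by
      rw [Finset.mul_sum]
      exact Finset.sum_congr rfl (by intro i _; simp [smul_eq_mul]; ring)
    rw [this, h, mul_zero]

/-- `R` is a recovery set for coordinate `i` of the code `C`: the value `x i` of any codeword
is determined by the values `x j`, `j ∈ R` (equivalently, the `i`-th column of a generator
matrix lies in the span of the columns indexed by `R`). -/
def IsRecoverySet {F : Type*} [Field F] {n : ℕ} (C : Submodule F (Fin n → F)) (i : Fin n)
    (R : Finset (Fin n)) : Prop :=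
  ∀ x ∈ C, (∀ j ∈ R, x j = 0) → x i = 0

lemma key {F : Type*} [Field F] [DecidableEq F] {n : ℕ}
    (C : Submodule F (Fin n → F)) (i : Fin n) (R : Finset (Fin n)) (hiR : i ∉ R)
    (hrec : ∀ x ∈ C, (∀ j ∈ R, x j = 0) → x i = 0) :
    ∃ w : Fin n → F, (∀ x ∈ C, ∑ k, x k * w k = 0) ∧ w ≠ 0 ∧ wt w ≤ R.card + 1 := by
  classical
  set φ : C →ₗ[F] (R → F) :=
    (LinearMap.funLeft F F (fun j : R => (j : Fin n))).comp C.subtype with hφ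
  set ψ : C →ₗ[F] F := (LinearMap.proj i).comp C.subtype with hψ
  have hker : LinearMap.ker φ ≤ LinearMap.ker ψ := by
    intro x hx
    simp only [LinearMap.mem_ker, hφ, hψ, LinearMap.comp_apply] at hx ⊢
    refine hrec x x.2 fun j hj => ?_
    have := congrFun hx ⟨j, hj⟩
    simpa using this
  set f0 : (C ⧸ LinearMap.ker φ) →ₗ[F] F := Submodule.liftQ _ ψ hker with hf0
  set f : LinearMap.range φ →ₗ[F] F := f0 ∘ₗ (φ.quotKerEquivRange.symm : _ →ₗ[F] _) with hf
  obtain ⟨g, hg⟩ := f.exists_extend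
  have hgφ : ∀ x : C, g (φ x) = ψ x := by
    intro x
    have h1 : φ x = (LinearMap.range φ).subtype ⟨φ x, LinearMap.mem_range_self φ x⟩ := rfl
    rw [h1, ← LinearMap.comp_apply, hg]
    simp only [hf, LinearMap.comp_apply, LinearEquiv.coe_coe]
    rw [φ.quotKerEquivRange_symm_apply_image]
    simp [hf0]
  set c : Fin n → F := fun k => if h : k ∈ R then g (Pi.single (⟨k, h⟩ : R) 1) else 0 with hc
  set w : Fin n → F := fun k => if k = i then -1 else c k with hw
  refine ⟨w, ?_, ?_, ?_⟩
  · intro x hx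
    have hgsum : g (φ ⟨x, hx⟩) = ∑ j : R, x j * c j := by
      have hrep : φ ⟨x, hx⟩ = ∑ j : R, Pi.single j (x (j : Fin n)) := by
        rw [Finset.univ_sum_single (fun j : R => x (j : Fin n))]
        rfl
      rw [hrep, map_sum]
      refine Finset.sum_congr rfl fun j _ => ?_
      have hsingle : (Pi.single j (x (j : Fin n)) : R → F)
          = x (j : Fin n) • (Pi.single j (1 : F) : R → F) := by
        funext l
        simp [Pi.single_apply]
      rw [hsingle, map_smul]
      simp [hc, smul_eq_mul]
    have hxi : g (φ ⟨x, hx⟩) = x i := hgφ ⟨x, hx⟩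
    have hsplit : ∑ k, x k * w k = x i * w i + ∑ k ∈ Finset.univ.erase i, x k * w k :=
      (Finset.add_sum_erase _ (fun k => x k * w k) (Finset.mem_univ i)).symm
    have h1 : x i * w i = -(x i) := by simp [hw]
    have h2 : ∑ k ∈ Finset.univ.erase i, x k * w k = ∑ j : R, x j * c j := by
      rw [← Finset.sum_subset (Finset.subset_erase.2 ⟨Finset.subset_univ R, hiR⟩)
        (f := fun k => x k * w k)]
      · rw [Finset.sum_coe_sort R (fun k => x k * c k)]
        refine Finset.sum_congr rfl fun k hk => ?_
        have hki : k ≠ i := fun h => hiR (h ▸ hk)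
        simp [hw, hki]
      · intro k _ hk
        have hki : k ≠ i := by
          rintro rfl
          simp at *
        simp [hw, hki, hc, hk]
    rw [hsplit, h1, h2, ← hgsum, hxi, neg_add_cancel]
  · intro h
    have := congrFun h i
    simp [hw] at this
  · have hsub : (Finset.univ.filter fun k => w k ≠ 0) ⊆ insert i R := by
      intro k hk
      simp only [Finset.mem_filter, Finset.mem_univ, true_and] at hk
      by_contra hkn
      simp only [Finset.mem_insert, not_or] at hkn
      exact hk (by simp [hw, hkn.1, hc, hkn.2])
    calc wt w ≤ (insert i R).card := Finset.card_le_card hsub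
      _ ≤ R.card + 1 := Finset.card_insert_le _ _

/-- A recovery set `R` for a coordinate `i` of a linear code `C`
satisfies `#R ≥ d(C⊥) − 1`; consequently, the locality `r` of a locally recoverable code
satisfies `r ≥ d(C⊥) − 1`. -/
theorem stmt1 {F : Type*} [Field F] [DecidableEq F] {n : ℕ} (hn : 0 < n)
    (C : Submodule F (Fin n → F)) :
    (∀ (i : Fin n) (R : Finset (Fin n)), i ∉ R → IsRecoverySet C i R →
      minWt (dualCode C : Set (Fin n → F)) - 1 ≤ R.card) ∧
    (∀ r : ℕ, (∀ i : Fin n, ∃ R : Finset (Fin n), i ∉ R ∧ R.card ≤ r ∧ IsRecoverySet C i R) →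
      minWt (dualCode C : Set (Fin n → F)) - 1 ≤ r) := by
  classical
  have part1 : ∀ (i : Fin n) (R : Finset (Fin n)), i ∉ R → IsRecoverySet C i R →
      minWt (dualCode C : Set (Fin n → F)) - 1 ≤ R.card := by
    intro i R hiR hrec
    obtain ⟨w, hw1, hw2, hw3⟩ := key C i R hiR hrec
    have hmem : wt w ∈ { m | ∃ x ∈ (dualCode C : Set (Fin n → F)), x ≠ 0 ∧ wt x = m } :=
      ⟨w, hw1, hw2, rfl⟩
    have h := Nat.sInf_le hmem
    have : minWt (dualCode C : Set (Fin n → F)) ≤ R.card + 1 := le_trans h hw3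
    omega
  refine ⟨part1, fun r hr => ?_⟩
  obtain ⟨R, h1, h2, h3⟩ := hr ⟨0, hn⟩
  exact le_trans (part1 _ R h1 h3) h2
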